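/- Let X be a topological space, F ⊆ X a functionally closed set, (h_n)_{n≥1} a sequence of continuous functions h_n : X → ℝ with F ⊆ h_n⁻¹(0) for every n, and G = X \ F. Then there exists a locally finite partition of unity (φ_n)_{n≥0} on G (continuous functions φ_n : G → [0,1] summing to 1, with locally finite supports) such that, setting G_n = {x ∈ G : φ_n(x) > 0}: (a) the closure of G_n in X is disjoint from F for every n ≥ 0; and (b) G_n ⊆ h_n⁻¹((−1/n, 1/n)) for every n ≥ 1. -/

import Mathlib

open Set Filter Topology

noncomputable def clamp (t : ℝ) : ℝ := max 0 (min t 1)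

lemma clamp_nonneg (t : ℝ) : 0 ≤ clamp t := le_max_left _ _

lemma clamp_le_one (t : ℝ) : clamp t ≤ 1 := max_le zero_le_one (min_le_right _ _)

lemma clamp_mono {t u : ℝ} (h : t ≤ u) : clamp t ≤ clamp u :=
  max_le_max le_rfl (min_le_min h le_rfl)

lemma continuous_clamp : Continuous clamp :=
  continuous_const.max (continuous_id.min continuous_const)

lemma clamp_eq_one {t : ℝ} (h : 1 ≤ t) : clamp t = 1 := by
  unfold clamp; rw [min_eq_right h]; exact max_eq_right zero_le_one

lemma clamp_eq_zero {t : ℝ} (h : t ≤ 0) : clamp t = 0 := by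
  unfold clamp
  rw [max_eq_left]
  exact (min_le_left t 1).trans h

lemma lt_of_clamp_pos {t : ℝ} (h : 0 < clamp t) : 0 < t := by
  by_contra hc; push_neg at hc; rw [clamp_eq_zero hc] at h; exact lt_irrefl _ h

lemma lt_of_clamp_lt_one {t : ℝ} (h : clamp t < 1) : t < 1 := by
  by_contra hc; push_neg at hc; rw [clamp_eq_one hc] at h; exact lt_irrefl _ h

section Aux

variable {X : Type*} [TopologicalSpace X]

/-- penalty term : equals `2 * 2⁻¹ ^ k` when `|h k x| ≥ 1/k`, vanishes when `h k x = 0`. -/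
noncomputable def sterm (h : ℕ → X → ℝ) (k : ℕ) (x : X) : ℝ :=
  2 * (2:ℝ)⁻¹ ^ k * clamp (2 * (k:ℝ) * |h k x| - 1)

lemma sterm_nonneg (h : ℕ → X → ℝ) (k : ℕ) (x : X) : 0 ≤ sterm h k x :=
  mul_nonneg (by positivity) (clamp_nonneg _)

lemma sterm_le (h : ℕ → X → ℝ) (k : ℕ) (x : X) : sterm h k x ≤ 2 * (2:ℝ)⁻¹ ^ k := by
  have := mul_le_mul_of_nonneg_left (clamp_le_one (2 * (k:ℝ) * |h k x| - 1))
    (show (0:ℝ) ≤ 2 * (2:ℝ)⁻¹ ^ k by positivity)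
  simpa [sterm] using this

lemma summable_sterm (h : ℕ → X → ℝ) (x : X) : Summable (fun k => sterm h k x) :=
  Summable.of_nonneg_of_le (fun k => sterm_nonneg h k x) (fun k => sterm_le h k x)
    ((summable_geometric_of_lt_one (by norm_num) (by norm_num)).mul_left 2)

noncomputable def sfun (h : ℕ → X → ℝ) (x : X) : ℝ := ∑' k, sterm h k x

lemma sfun_nonneg (h : ℕ → X → ℝ) (x : X) : 0 ≤ sfun h x :=
  tsum_nonneg (fun k => sterm_nonneg h k x)

lemma sterm_le_sfun (h : ℕ → X → ℝ) (n : ℕ) (x : X) : sterm h n x ≤ sfun h x :=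
  Summable.le_tsum (summable_sterm h x) n (fun j _ => sterm_nonneg h j x)

lemma continuous_sfun (h : ℕ → X → ℝ) (hh : ∀ n, Continuous (h n)) :
    Continuous (sfun h) := by
  apply continuous_tsum (f := fun k x => sterm h k x)
    (u := fun k => 2 * (2:ℝ)⁻¹ ^ k)
  · intro k
    exact continuous_const.mul
      (continuous_clamp.comp ((continuous_const.mul (hh k).abs).sub continuous_const))
  · exact (summable_geometric_of_lt_one (by norm_num) (by norm_num)).mul_left 2
  · intro k x
    rw [Real.norm_of_nonneg (sterm_nonneg h k x)]
    exact sterm_le h k x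

lemma sfun_eq_zero (h : ℕ → X → ℝ) (x : X) (hx : ∀ k, h k x = 0) : sfun h x = 0 := by
  have : ∀ k, sterm h k x = 0 := by
    intro k
    have : clamp (2 * (k:ℝ) * |h k x| - 1) = 0 := by
      apply clamp_eq_zero
      rw [hx k]
      simp
    simp [sterm, this]
  simp [sfun, this]

/-- cumulative step functions of a dyadic partition of unity on `(0, ∞)`. -/
noncomputable def Cfun : ℕ → ℝ → ℝ
  | 0, _ => 0
  | (m+1), t => clamp (2 ^ (m+1) * t - 1)

lemma Cfun_nonneg (m : ℕ) (t : ℝ) : 0 ≤ Cfun m t := by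
  cases m with
  | zero => simp [Cfun]
  | succ m => exact clamp_nonneg _

lemma Cfun_le_one (m : ℕ) (t : ℝ) : Cfun m t ≤ 1 := by
  cases m with
  | zero => simp [Cfun]
  | succ m => exact clamp_le_one _

lemma continuous_Cfun (m : ℕ) : Continuous (Cfun m) := by
  cases m with
  | zero => exact continuous_const (y := (0:ℝ))
  | succ m =>
    exact continuous_clamp.comp ((continuous_const.mul continuous_id).sub continuous_const)

lemma Cfun_mono (m : ℕ) {t : ℝ} (ht : 0 ≤ t) : Cfun m t ≤ Cfun (m+1) t := by
  cases m with
  | zero => simp only [Cfun]; exact clamp_nonneg _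
  | succ m =>
    apply clamp_mono
    have : (2:ℝ) ^ (m+1) ≤ 2 ^ (m+2) := by
      apply pow_le_pow_right₀ (by norm_num) (by omega)
    nlinarith

lemma Cfun_eq_one {m : ℕ} (hm : 1 ≤ m) {t : ℝ} (ht : 2 / 2 ^ m ≤ t) : Cfun m t = 1 := by
  obtain ⟨k, rfl⟩ : ∃ k, m = k + 1 := ⟨m - 1, by omega⟩
  apply clamp_eq_one
  rw [div_le_iff₀ (by positivity)] at ht
  nlinarith [ht]

lemma θ_lt_of_Cfun_pos {m : ℕ} {t : ℝ} (h : 0 < Cfun (m+1) t) : 1 / 2 ^ (m+1) < t := by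
  have := lt_of_clamp_pos (t := 2 ^ (m+1) * t - 1) h
  rw [div_lt_iff₀ (by positivity)]
  nlinarith

lemma θ_lt_of_Cfun_lt_one {m : ℕ} {t : ℝ} (h : Cfun (m+1) t < 1) : t < 2 / 2 ^ (m+1) := by
  have := lt_of_clamp_lt_one (t := 2 ^ (m+1) * t - 1) h
  rw [lt_div_iff₀ (by positivity)]
  nlinarith

end Aux

theorem stmt3 {X : Type*} [TopologicalSpace X] (F : Set X)
    (hF : ∃ φ : X → ℝ, Continuous φ ∧ (∀ x, φ x ∈ Icc (0:ℝ) 1) ∧ F = φ ⁻¹' {0})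
    (h : ℕ → X → ℝ) (hh : ∀ n, Continuous (h n))
    (hhF : ∀ n, F ⊆ (h n) ⁻¹' {0})
    (G : Set X) (hG : G = Fᶜ) :
    ∃ φ : ℕ → X → ℝ,
      (∀ n, ContinuousOn (φ n) G) ∧
      (∀ n, ∀ x ∈ G, φ n x ∈ Icc (0:ℝ) 1) ∧
      (∀ x ∈ G, HasSum (fun n => φ n x) 1) ∧
      -- local finiteness of the supports on G
      (∀ x ∈ G, ∃ U : Set X, IsOpen U ∧ x ∈ U ∧
        {n : ℕ | (U ∩ {y ∈ G | 0 < φ n y}).Nonempty}.Finite) ∧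
      -- (a) closures of supports are disjoint from F
      (∀ n, closure {y ∈ G | 0 < φ n y} ∩ F = ∅) ∧
      -- (b)
      (∀ n, 1 ≤ n → {y ∈ G | 0 < φ n y} ⊆ (h n) ⁻¹' (Ioo (-(1/(n:ℝ))) (1/(n:ℝ)))) := by
  obtain ⟨ψ, hψc, hψ01, hψF⟩ := hF
  set θ : X → ℝ := fun x => max (ψ x) (sfun h x) with hθdef
  have hθc : Continuous θ := hψc.max (continuous_sfun h hh)
  have hθ0 : ∀ x, 0 ≤ θ x := fun x => le_trans (hψ01 x).1 (le_max_left _ _)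
  have hθF : ∀ x ∈ F, θ x = 0 := by
    intro x hx
    have h1 : ψ x = 0 := by
      have := hψF ▸ hx; simpa using this
    have h2 : sfun h x = 0 := sfun_eq_zero h x (fun k => by
      have := hhF k hx; simpa using this)
    simp [hθdef, h1, h2]
  have hθG : ∀ x ∈ G, 0 < θ x := by
    intro x hx
    rw [hG] at hx
    have : ψ x ≠ 0 := by
      intro hc
      exact hx (by rw [hψF]; simpa using hc)
    have : 0 < ψ x := lt_of_le_of_ne (hψ01 x).1 (Ne.symm this)
    exact lt_of_lt_of_le this (le_max_left _ _)
  -- key lemma for (b)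
  have hkey : ∀ n : ℕ, 1 ≤ n → ∀ y : X, θ y < 2 / 2 ^ n → |h n y| < 1 / n := by
    intro n hn y hy
    by_contra hc
    push_neg at hc
    have h1 : (1:ℝ) ≤ 2 * (n:ℝ) * |h n y| - 1 := by
      have hn' : (0:ℝ) < n := by exact_mod_cast hn
      rw [div_le_iff₀ hn'] at hc
      nlinarith
    have h2 : sterm h n y = 2 * (2:ℝ)⁻¹ ^ n := by
      rw [sterm, clamp_eq_one h1, mul_one]
    have h3 : 2 / 2 ^ n ≤ θ y := by
      calc (2:ℝ) / 2 ^ n = 2 * (2:ℝ)⁻¹ ^ n := by rw [inv_pow]; ring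
      _ ≤ sfun h y := h2 ▸ sterm_le_sfun h n y
      _ ≤ θ y := le_max_right _ _
    linarith
  refine ⟨fun n x => Cfun (n+1) (θ x) - Cfun n (θ x), ?_, ?_, ?_, ?_, ?_, ?_⟩
  · intro n
    exact (((continuous_Cfun (n+1)).comp hθc).sub ((continuous_Cfun n).comp hθc)).continuousOn
  · intro n x _
    show Cfun (n+1) (θ x) - Cfun n (θ x) ∈ Icc (0:ℝ) 1
    rw [Set.mem_Icc]
    refine ⟨sub_nonneg.mpr (Cfun_mono n (hθ0 x)), ?_⟩
    have h1 := Cfun_le_one (n+1) (θ x)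
    have h2 := Cfun_nonneg n (θ x)
    linarith
  · intro x hx
    obtain ⟨N, hN⟩ := exists_pow_lt_of_lt_one (half_pos (hθG x hx)) (show (2:ℝ)⁻¹ < 1 by norm_num)
    have hNθ : 2 / 2 ^ N < θ x := by
      have : (2:ℝ)⁻¹ ^ N = (2 ^ N)⁻¹ := inv_pow 2 N
      rw [this] at hN
      rw [div_lt_iff₀ (by positivity)]
      rw [inv_lt_iff_one_lt_mul₀ (by positivity)] at hN
      nlinarith [hθG x hx]
    have hbig : ∀ m, N + 1 ≤ m → Cfun m (θ x) = 1 := by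
      intro m hm
      apply Cfun_eq_one (by omega)
      calc (2:ℝ) / 2 ^ m ≤ 2 / 2 ^ N := by
            apply div_le_div_of_nonneg_left (by norm_num) (by positivity)
            exact pow_le_pow_right₀ (by norm_num) (by omega)
      _ ≤ θ x := le_of_lt hNθ
    have hsum : ∑ n ∈ Finset.range (N+1), (Cfun (n+1) (θ x) - Cfun n (θ x)) = 1 := by
      rw [Finset.sum_range_sub (fun m => Cfun m (θ x))]
      rw [hbig (N+1) le_rfl]
      simp [Cfun]
    have := hasSum_sum_of_ne_finset_zero (L := SummationFilter.unconditional ℕ) (s := Finset.range (N+1))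
      (f := fun n => Cfun (n+1) (θ x) - Cfun n (θ x)) ?_
    · rwa [hsum] at this
    · intro n hn
      simp only [Finset.mem_range, not_lt] at hn
      show Cfun (n+1) (θ x) - Cfun n (θ x) = 0
      rw [hbig (n+1) (by omega), hbig n (by omega), sub_self]
  · intro x hx
    refine ⟨θ ⁻¹' Ioi (θ x / 2), hθc.isOpen_preimage _ isOpen_Ioi,
      by simp [half_lt_self (hθG x hx)], ?_⟩
    obtain ⟨M, hM⟩ := exists_pow_lt_of_lt_one
      (show (0:ℝ) < θ x / 4 by linarith [hθG x hx]) (show (2:ℝ)⁻¹ < 1 by norm_num)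
    apply Set.Finite.subset (Set.finite_Iio (M+1))
    intro n hn
    simp only [Set.mem_setOf_eq] at hn
    obtain ⟨y, hyU, hyG, hyφ⟩ := hn
    simp only [Set.mem_preimage, Set.mem_Ioi] at hyU
    by_contra hc
    simp only [Set.mem_Iio, not_lt] at hc
    -- n ≥ M+1 ≥ 1
    have h1 : Cfun n (θ y) < 1 := by
      have := Cfun_le_one (n+1) (θ y)
      linarith
    obtain ⟨k, rfl⟩ : ∃ k, n = k + 1 := ⟨n - 1, by omega⟩
    have h2 : θ y < 2 / 2 ^ (k+1) := θ_lt_of_Cfun_lt_one h1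
    have h3 : (2:ℝ) / 2 ^ (k+1) ≤ 2 / 2 ^ M := by
      apply div_le_div_of_nonneg_left (by norm_num) (by positivity)
      exact pow_le_pow_right₀ (by norm_num) (by omega)
    have h4 : (2:ℝ) / 2 ^ M < θ x / 2 := by
      have : (2:ℝ)⁻¹ ^ M = (2 ^ M)⁻¹ := inv_pow 2 M
      rw [this] at hM
      rw [div_lt_iff₀ (by positivity)]
      rw [inv_lt_iff_one_lt_mul₀ (by positivity)] at hM
      nlinarith
    linarith
  · intro n
    apply Set.eq_empty_of_forall_notMem
    intro z hz
    obtain ⟨hz1, hz2⟩ := hz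
    have hsub : {y | y ∈ G ∧ 0 < Cfun (n+1) (θ y) - Cfun n (θ y)} ⊆ θ ⁻¹' Ici (1 / 2 ^ (n+1)) := by
      intro y hy
      have : 0 < Cfun (n+1) (θ y) := lt_of_lt_of_le hy.2 (by
        have := Cfun_nonneg n (θ y); linarith)
      exact le_of_lt (θ_lt_of_Cfun_pos this)
    have hcl : closure {y | y ∈ G ∧ 0 < Cfun (n+1) (θ y) - Cfun n (θ y)} ⊆
        θ ⁻¹' Ici (1 / 2 ^ (n+1)) :=
      closure_minimal hsub ((isClosed_Ici).preimage hθc)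
    have := hcl hz1
    simp only [Set.mem_preimage, Set.mem_Ici] at this
    rw [hθF z hz2] at this
    have : (0:ℝ) < 1 / 2 ^ (n+1) := by positivity
    linarith
  · intro n hn y hy
    obtain ⟨hyG, hyφ⟩ := hy
    have hyφ' : 0 < Cfun (n+1) (θ y) - Cfun n (θ y) := hyφ
    have h1 : Cfun n (θ y) < 1 := by
      have := Cfun_le_one (n+1) (θ y)
      linarith
    obtain ⟨k, rfl⟩ : ∃ k, n = k + 1 := ⟨n - 1, by omega⟩
    have h2 : θ y < 2 / 2 ^ (k+1) := θ_lt_of_Cfun_lt_one h1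
    have := hkey (k+1) hn y h2
    rw [abs_lt] at this
    simp only [Set.mem_preimage, Set.mem_Ioo]
    exact ⟨by linarith [this.1], this.2⟩
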